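/- Let L be an N×N Laplacian matrix, let P_e be an N×N row stochastic matrix with strictly positive diagonal entries, and suppose that the directed graph on vertices {1, …, N} with an edge from j to i whenever i ≠ j and (P_e)_{ij} > 0 or L_{ij} < 0 contains a directed spanning tree. Then for every t > 0 the matrix P_e · exp(-tL) is SIA. -/

import Mathlib

open Matrix Filter Topology

open NormedSpace Nat

variable {N : ℕ}

lemma myExpHasSum (B : Matrix (Fin N) (Fin N) ℝ) :
    HasSum (fun n : ℕ => (n !⁻¹ : ℝ) • B ^ n) (exp B) := by
  letI : SeminormedRing (Matrix (Fin N) (Fin N) ℝ) := Matrix.linftyOpSemiNormedRing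
  letI : NormedRing (Matrix (Fin N) (Fin N) ℝ) := Matrix.linftyOpNormedRing
  letI : NormedAlgebra ℝ (Matrix (Fin N) (Fin N) ℝ) := Matrix.linftyOpNormedAlgebra
  exact exp_series_hasSum_exp' B

lemma myEntryHasSum {f : ℕ → Matrix (Fin N) (Fin N) ℝ} {S : Matrix (Fin N) (Fin N) ℝ}
    (h : HasSum f S) (i j : Fin N) : HasSum (fun n => f n i j) (S i j) :=
  h.map (AddMonoidHom.mk' (fun M : Matrix (Fin N) (Fin N) ℝ => M i j) (fun _ _ => rfl))
    (Continuous.matrix_elem continuous_id i j)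

lemma myScalarExp (c : ℝ) :
    exp (c • (1 : Matrix (Fin N) (Fin N) ℝ)) = Real.exp c • (1 : Matrix (Fin N) (Fin N) ℝ) := by
  rw [Matrix.smul_one_eq_diagonal, Matrix.exp_diagonal, Pi.exp_def, Real.exp_eq_exp_ℝ,
    ← Matrix.smul_one_eq_diagonal]

lemma myPowNonneg {B : Matrix (Fin N) (Fin N) ℝ} (h : ∀ i j, 0 ≤ B i j) :
    ∀ (n : ℕ) (i j), 0 ≤ (B ^ n) i j := by
  intro n
  induction n with
  | zero =>
    intro i j
    rw [pow_zero]
    by_cases hij : i = j <;> simp [Matrix.one_apply, hij]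
  | succ n ih =>
    intro i j
    rw [pow_succ, Matrix.mul_apply]
    exact Finset.sum_nonneg fun k _ => mul_nonneg (ih i k) (h k j)

lemma myTermLeExp {B : Matrix (Fin N) (Fin N) ℝ} (h : ∀ i j, 0 ≤ B i j) (n : ℕ) (i j : Fin N) :
    ((n !⁻¹ : ℝ) • B ^ n) i j ≤ exp B i j := by
  refine le_hasSum (myEntryHasSum (myExpHasSum B) i j) n fun m _ => ?_
  rw [Matrix.smul_apply, smul_eq_mul]
  have h1 : (0:ℝ) ≤ (m !⁻¹ : ℝ) := by positivity
  exact mul_nonneg h1 (myPowNonneg h m i j)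

lemma myExpEntryNonneg {B : Matrix (Fin N) (Fin N) ℝ} (h : ∀ i j, 0 ≤ B i j) (i j : Fin N) :
    0 ≤ exp B i j := by
  have := myTermLeExp h 0 i j
  refine le_trans ?_ this
  rw [pow_zero, Matrix.smul_apply, smul_eq_mul]
  by_cases hij : i = j <;> simp [Matrix.one_apply, hij]

lemma myExpDiagPos {B : Matrix (Fin N) (Fin N) ℝ} (h : ∀ i j, 0 ≤ B i j) (i : Fin N) :
    0 < exp B i i := by
  have := myTermLeExp h 0 i i
  refine lt_of_lt_of_le ?_ this
  rw [pow_zero, Matrix.smul_apply, smul_eq_mul]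
  simp [Matrix.one_apply]

lemma myExpEntryLB {B : Matrix (Fin N) (Fin N) ℝ} (h : ∀ i j, 0 ≤ B i j) (i j : Fin N) :
    B i j ≤ exp B i j := by
  have := myTermLeExp h 1 i j
  refine le_trans ?_ this
  rw [pow_one, Matrix.smul_apply, smul_eq_mul]
  simp

lemma myRowSumMul (C B : Matrix (Fin N) (Fin N) ℝ) (i : Fin N) :
    ∑ j, (C * B) i j = ∑ k, C i k * ∑ j, B k j := by
  simp_rw [Matrix.mul_apply, Finset.mul_sum]
  exact Finset.sum_comm

lemma myExpRowSum {B : Matrix (Fin N) (Fin N) ℝ} (h : ∀ i, ∑ j, B i j = 0) (i : Fin N) :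
    ∑ j, exp B i j = 1 := by
  have hs : HasSum (fun n : ℕ => ∑ j, ((n !⁻¹ : ℝ) • B ^ n) i j) (∑ j, exp B i j) :=
    hasSum_sum fun j _ => myEntryHasSum (myExpHasSum B) i j
  have hfun : ∀ n : ℕ, (∑ j, ((n !⁻¹ : ℝ) • B ^ n) i j) = if n = 0 then 1 else 0 := by
    intro n
    cases n with
    | zero => simp [Matrix.one_apply]
    | succ m =>
      have hrow : ∀ k : ℕ, 1 ≤ k → ∀ l, ∑ j, (B ^ k) l j = 0 := by
        intro k hk
        induction k with
        | zero => omega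
        | succ p ih =>
          intro l
          rcases Nat.eq_zero_or_pos p with hp | hp
          · subst hp; simpa using h l
          · rw [pow_succ, myRowSumMul]
            simp [h]
      simp only [Matrix.smul_apply, smul_eq_mul, ← Finset.mul_sum]
      rw [hrow (m + 1) (by omega) i]
      simp
  have h2 : HasSum (fun n : ℕ => if n = 0 then (1 : ℝ) else 0) (∑ j, exp B i j) := by
    rwa [funext hfun] at hs
  have h3 : HasSum (fun n : ℕ => if n = 0 then (1 : ℝ) else 0) 1 := by
    have := hasSum_single (f := fun n : ℕ => if n = 0 then (1 : ℝ) else 0) 0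
      (by intro b hb; simp [hb])
    simpa using this
  exact h2.unique h3

lemma myStochUB {S : Matrix (Fin N) (Fin N) ℝ} (hne : (Finset.univ : Finset (Fin N)).Nonempty)
    (hnn : ∀ i j, 0 ≤ S i j) (hrow : ∀ i, ∑ j, S i j = 1) (x : Fin N → ℝ) (i : Fin N) :
    ∑ j, S i j * x j ≤ Finset.univ.sup' hne x := by
  calc ∑ j, S i j * x j ≤ ∑ j, S i j * Finset.univ.sup' hne x :=
        Finset.sum_le_sum fun j _ =>
          mul_le_mul_of_nonneg_left (Finset.le_sup' x (Finset.mem_univ j)) (hnn i j)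
    _ = Finset.univ.sup' hne x := by rw [← Finset.sum_mul, hrow, one_mul]

lemma myStochLB {S : Matrix (Fin N) (Fin N) ℝ} (hne : (Finset.univ : Finset (Fin N)).Nonempty)
    (hnn : ∀ i j, 0 ≤ S i j) (hrow : ∀ i, ∑ j, S i j = 1) (x : Fin N → ℝ) (i : Fin N) :
    Finset.univ.inf' hne x ≤ ∑ j, S i j * x j := by
  calc Finset.univ.inf' hne x = ∑ j, S i j * Finset.univ.inf' hne x := by
        rw [← Finset.sum_mul, hrow, one_mul]
    _ ≤ ∑ j, S i j * x j :=
        Finset.sum_le_sum fun j _ =>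
          mul_le_mul_of_nonneg_left (Finset.inf'_le x (Finset.mem_univ j)) (hnn i j)

lemma myKeySplit {S : Matrix (Fin N) (Fin N) ℝ} {r : Fin N} {ε : ℝ} (x : Fin N → ℝ) (i : Fin N) :
    ∑ j, S i j * x j
      = ε * x r + ∑ j, (S i j - if j = r then ε else 0) * x j := by
  simp only [sub_mul, Finset.sum_sub_distrib, ite_mul, zero_mul]
  rw [Finset.sum_ite_eq' Finset.univ r (fun j => ε * x j)]
  simp only [Finset.mem_univ, if_true]
  ring

lemma myGSum {S : Matrix (Fin N) (Fin N) ℝ} {r : Fin N} {ε : ℝ} (hrow : ∀ i, ∑ j, S i j = 1)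
    (i : Fin N) : ∑ j, (S i j - if j = r then ε else 0) = 1 - ε := by
  rw [Finset.sum_sub_distrib, hrow i, Finset.sum_ite_eq' Finset.univ r (fun _ => ε)]
  simp

lemma myContractUB {S : Matrix (Fin N) (Fin N) ℝ} (hne : (Finset.univ : Finset (Fin N)).Nonempty)
    (hnn : ∀ i j, 0 ≤ S i j) (hrow : ∀ i, ∑ j, S i j = 1) {r : Fin N} {ε : ℝ}
    (hε : ∀ i, ε ≤ S i r) (x : Fin N → ℝ) (i : Fin N) :
    ∑ j, S i j * x j ≤ ε * x r + (1 - ε) * Finset.univ.sup' hne x := by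
  have hgnn : ∀ j, 0 ≤ S i j - if j = r then ε else 0 := by
    intro j
    by_cases hj : j = r
    · subst hj; simpa using sub_nonneg.2 (hε i)
    · simpa [hj] using hnn i j
  rw [myKeySplit (r := r) (ε := ε) x i]
  refine add_le_add (le_refl _) ?_
  calc ∑ j, (S i j - if j = r then ε else 0) * x j
      ≤ ∑ j, (S i j - if j = r then ε else 0) * Finset.univ.sup' hne x :=
        Finset.sum_le_sum fun j _ =>
          mul_le_mul_of_nonneg_left (Finset.le_sup' x (Finset.mem_univ j)) (hgnn j)
    _ = (1 - ε) * Finset.univ.sup' hne x := by rw [← Finset.sum_mul, myGSum hrow]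

lemma myContractLB {S : Matrix (Fin N) (Fin N) ℝ} (hne : (Finset.univ : Finset (Fin N)).Nonempty)
    (hnn : ∀ i j, 0 ≤ S i j) (hrow : ∀ i, ∑ j, S i j = 1) {r : Fin N} {ε : ℝ}
    (hε : ∀ i, ε ≤ S i r) (x : Fin N → ℝ) (i : Fin N) :
    ε * x r + (1 - ε) * Finset.univ.inf' hne x ≤ ∑ j, S i j * x j := by
  have hgnn : ∀ j, 0 ≤ S i j - if j = r then ε else 0 := by
    intro j
    by_cases hj : j = r
    · subst hj; simpa using sub_nonneg.2 (hε i)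
    · simpa [hj] using hnn i j
  rw [myKeySplit (r := r) (ε := ε) x i]
  refine add_le_add (le_refl _) ?_
  calc (1 - ε) * Finset.univ.inf' hne x
      = ∑ j, (S i j - if j = r then ε else 0) * Finset.univ.inf' hne x := by
        rw [← Finset.sum_mul, myGSum hrow]
    _ ≤ ∑ j, (S i j - if j = r then ε else 0) * x j :=
        Finset.sum_le_sum fun j _ =>
          mul_le_mul_of_nonneg_left (Finset.inf'_le x (Finset.mem_univ j)) (hgnn j)

lemma myColumnsConverge {M : Matrix (Fin N) (Fin N) ℝ}
    (hne : (Finset.univ : Finset (Fin N)).Nonempty)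
    (hnn : ∀ i j, 0 ≤ M i j) (hrow : ∀ i, ∑ j, M i j = 1)
    {K : ℕ} (hK : 0 < K) {r : Fin N} (hcol : ∀ i, 0 < (M ^ K) i r) :
    ∃ c : Fin N → ℝ, ∀ i j, Tendsto (fun k => (M ^ k) i j) atTop (𝓝 (c j)) := by
  have hPnn : ∀ (k : ℕ) (i j), 0 ≤ (M ^ k) i j := myPowNonneg hnn
  have hProw : ∀ (k : ℕ) (i), ∑ j, (M ^ k) i j = 1 := by
    intro k
    induction k with
    | zero => intro i; simp [Matrix.one_apply]
    | succ n ih =>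
      intro i
      rw [pow_succ, myRowSumMul]
      simp [hrow, ih i]
  set ε : ℝ := Finset.univ.inf' hne (fun i => (M ^ K) i r) with hε_def
  have hε0 : 0 < ε := (Finset.lt_inf'_iff hne).2 fun i _ => hcol i
  have hεle : ∀ i, ε ≤ (M ^ K) i r := fun i => Finset.inf'_le _ (Finset.mem_univ i)
  have hε1 : ε ≤ 1 := by
    refine le_trans (hεle r) ?_
    calc (M ^ K) r r ≤ ∑ j, (M ^ K) r j :=
          Finset.single_le_sum (fun j _ => hPnn K r j) (Finset.mem_univ r)
      _ = 1 := hProw K r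
  have hconv : ∀ j : Fin N, ∃ cj : ℝ,
      ∀ i, Tendsto (fun k => (M ^ k) i j) atTop (𝓝 cj) := by
    intro j
    set x : ℕ → Fin N → ℝ := fun k i => (M ^ k) i j with hx_def
    set A : ℕ → ℝ := fun k => Finset.univ.sup' hne (x k) with hA_def
    set Bf : ℕ → ℝ := fun k => Finset.univ.inf' hne (x k) with hB_def
    have hstep : ∀ k i, x (k + 1) i = ∑ l, M i l * x k l := by
      intro k i
      show (M ^ (k + 1)) i j = _
      rw [_root_.pow_succ', Matrix.mul_apply]
    have hstepK : ∀ k i, x (K + k) i = ∑ l, (M ^ K) i l * x k l := by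
      intro k i
      show (M ^ (K + k)) i j = _
      rw [pow_add, Matrix.mul_apply]
    have hAdec : ∀ k, A (k + 1) ≤ A k := by
      intro k
      refine Finset.sup'_le hne _ fun i _ => ?_
      rw [hstep]
      exact myStochUB hne hnn hrow (x k) i
    have hBinc : ∀ k, Bf k ≤ Bf (k + 1) := by
      intro k
      refine Finset.le_inf' hne _ fun i _ => ?_
      rw [hstep]
      exact myStochLB hne hnn hrow (x k) i
    have hBA : ∀ k, Bf k ≤ A k := fun k =>
      le_trans (Finset.inf'_le (x k) (Finset.mem_univ r)) (Finset.le_sup' (x k) (Finset.mem_univ r))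
    have hcontr : ∀ k, A (K + k) - Bf (K + k) ≤ (1 - ε) * (A k - Bf k) := by
      intro k
      have hub : A (K + k) ≤ ε * x k r + (1 - ε) * A k := by
        refine Finset.sup'_le hne _ fun i _ => ?_
        rw [hstepK]
        exact myContractUB hne (hPnn K) (hProw K) hεle (x k) i
      have hlb : ε * x k r + (1 - ε) * Bf k ≤ Bf (K + k) := by
        refine Finset.le_inf' hne _ fun i _ => ?_
        rw [hstepK]
        exact myContractLB hne (hPnn K) (hProw K) hεle (x k) i
      have := sub_le_sub hub hlb
      calc A (K + k) - Bf (K + k)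
          ≤ (ε * x k r + (1 - ε) * A k) - (ε * x k r + (1 - ε) * Bf k) := this
        _ = (1 - ε) * (A k - Bf k) := by ring
    set d : ℕ → ℝ := fun k => A k - Bf k with hd_def
    have hdnn : ∀ k, 0 ≤ d k := fun k => sub_nonneg.2 (hBA k)
    have hdant : Antitone d := by
      refine antitone_nat_of_succ_le fun k => ?_
      have h1 := hAdec k
      have h2 := hBinc k
      simp only [hd_def]
      linarith
    have hgeo : ∀ q k, d (q * K + k) ≤ (1 - ε) ^ q * d k := by
      intro q
      induction q with
      | zero => intro k; simp
      | succ p ih =>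
        intro k
        have h1 : (p + 1) * K + k = K + (p * K + k) := by ring
        rw [h1]
        calc d (K + (p * K + k)) ≤ (1 - ε) * d (p * K + k) := hcontr _
          _ ≤ (1 - ε) * ((1 - ε) ^ p * d k) :=
              mul_le_mul_of_nonneg_left (ih k) (by linarith)
          _ = (1 - ε) ^ (p + 1) * d k := by ring
    have hdk : ∀ k, d k ≤ (1 - ε) ^ (k / K) * d 0 := by
      intro k
      have h1 : k / K * K ≤ k := Nat.div_mul_le_self k K
      have h2 := hdant h1
      have h3 := hgeo (k / K) 0
      simpa using le_trans h2 h3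
    have hdiv : Tendsto (fun k : ℕ => k / K) atTop atTop :=
      tendsto_atTop_atTop.2 fun b => ⟨b * K, fun k hk => (Nat.le_div_iff_mul_le hK).2 hk⟩
    have hpow : Tendsto (fun k : ℕ => (1 - ε) ^ (k / K) * d 0) atTop (𝓝 0) := by
      have h1 : Tendsto (fun q : ℕ => (1 - ε) ^ q) atTop (𝓝 0) :=
        tendsto_pow_atTop_nhds_zero_of_lt_one (by linarith) (by linarith)
      have h2 := (h1.comp hdiv).mul_const (d 0)
      simpa using h2
    have hd0 : Tendsto d atTop (𝓝 0) :=
      tendsto_of_tendsto_of_tendsto_of_le_of_le tendsto_const_nhds hpow hdnn hdk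
    have hAant : Antitone A := antitone_nat_of_succ_le hAdec
    have hBmono : Monotone Bf := monotone_nat_of_le_succ hBinc
    have hAbdd : BddBelow (Set.range A) := by
      refine ⟨Bf 0, ?_⟩
      rintro _ ⟨k, rfl⟩
      exact le_trans (hBmono (Nat.zero_le k)) (hBA k)
    have hA : Tendsto A atTop (𝓝 (⨅ k, A k)) := tendsto_atTop_ciInf hAant hAbdd
    have hB : Tendsto Bf atTop (𝓝 (⨅ k, A k)) := by
      have h1 := hA.sub hd0
      rw [sub_zero] at h1
      have heq : (fun k => A k - d k) = Bf := funext fun k => by simp [hd_def]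
      rwa [heq] at h1
    refine ⟨⨅ k, A k, fun i => ?_⟩
    exact tendsto_of_tendsto_of_tendsto_of_le_of_le hB hA
      (fun k => Finset.inf'_le (x k) (Finset.mem_univ i))
      (fun k => Finset.le_sup' (x k) (Finset.mem_univ i))
  choose c hc using hconv
  exact ⟨c, fun i j => hc j i⟩

/-- Let `L` be an `N × N` Laplacian matrix and `Pe` a row stochastic matrix with
strictly positive diagonal entries, and suppose the directed graph with an edge from `j` to `i`
whenever `i ≠ j` and (`Pe i j > 0` or `L i j < 0`) contains a directed spanning tree.  Then for
every `t > 0` the matrix `Pe * exp (-t L)` is SIA: its powers converge to `1_N cᵀ`. -/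
theorem mul_expNegLaplacian_isSIA (N : ℕ) (L Pe : Matrix (Fin N) (Fin N) ℝ)
    (hLoff : ∀ i j : Fin N, i ≠ j → L i j ≤ 0)
    (hLrow : ∀ i : Fin N, ∑ j, L i j = 0)
    (hPnn : ∀ i j : Fin N, 0 ≤ Pe i j)
    (hProw : ∀ i : Fin N, ∑ j, Pe i j = 1)
    (hPdiag : ∀ i : Fin N, 0 < Pe i i)
    (htree : ∃ r : Fin N, ∀ i : Fin N,
      Relation.ReflTransGen (fun j i : Fin N => i ≠ j ∧ (0 < Pe i j ∨ L i j < 0)) r i)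
    (t : ℝ) (ht : 0 < t) :
    ∃ c : Fin N → ℝ,
      Tendsto (fun k : ℕ => (Pe * NormedSpace.exp (-(t • L))) ^ k) atTop
        (𝓝 (Matrix.of fun _ j : Fin N => c j)) := by

  obtain ⟨r, hr⟩ := htree
  have hne : (Finset.univ : Finset (Fin N)).Nonempty := ⟨r, Finset.mem_univ r⟩
  have hLdiag : ∀ i, 0 ≤ L i i := by
    intro i
    have h1 : L i i + ∑ j ∈ Finset.univ.erase i, L i j = 0 := by
      rw [Finset.add_sum_erase _ _ (Finset.mem_univ i)]; exact hLrow i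
    have h2 : ∑ j ∈ Finset.univ.erase i, L i j ≤ 0 :=
      Finset.sum_nonpos fun j hj => hLoff i j (Ne.symm (Finset.mem_erase.1 hj).1)
    linarith
  set s : ℝ := ∑ i, L i i with hs_def
  have hsle : ∀ i, L i i ≤ s :=
    fun i => Finset.single_le_sum (fun j _ => hLdiag j) (Finset.mem_univ i)
  set A : Matrix (Fin N) (Fin N) ℝ := s • (1 : Matrix (Fin N) (Fin N) ℝ) - L with hA_def
  have hAnn : ∀ i j, 0 ≤ A i j := by
    intro i j
    by_cases hij : i = j
    · subst hij
      have : A i i = s - L i i := by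
        simp [hA_def, Matrix.sub_apply, Matrix.smul_apply, Matrix.one_apply_eq, smul_eq_mul]
      rw [this]
      linarith [hsle i]
    · have : A i j = -L i j := by
        simp [hA_def, Matrix.sub_apply, Matrix.smul_apply, Matrix.one_apply_ne hij, smul_eq_mul]
      rw [this]
      linarith [hLoff i j hij]
  have hAoff : ∀ i j, i ≠ j → A i j = -L i j := by
    intro i j hij
    simp [hA_def, Matrix.sub_apply, Matrix.smul_apply, Matrix.one_apply_ne hij, smul_eq_mul]
  have htAnn : ∀ i j, 0 ≤ (t • A) i j := by
    intro i j
    rw [Matrix.smul_apply, smul_eq_mul]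
    exact mul_nonneg ht.le (hAnn i j)
  have hsplit : -(t • L) = t • A + (-(t * s)) • (1 : Matrix (Fin N) (Fin N) ℝ) := by
    ext i j
    simp only [hA_def, Matrix.neg_apply, Matrix.add_apply, Matrix.sub_apply, Matrix.smul_apply,
      smul_eq_mul]
    ring
  set E : Matrix (Fin N) (Fin N) ℝ := NormedSpace.exp (-(t • L)) with hE_def
  have hEfact : E = Real.exp (-(t * s)) • NormedSpace.exp (t • A) := by
    rw [hE_def, hsplit,
      Matrix.exp_add_of_commute _ _ ((Commute.one_right (t • A)).smul_right (-(t * s))),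
      myScalarExp, mul_smul_comm, mul_one]
  have hEentry : ∀ i j, E i j = Real.exp (-(t * s)) * NormedSpace.exp (t • A) i j := by
    intro i j
    rw [hEfact, Matrix.smul_apply, smul_eq_mul]
  have hEnn : ∀ i j, 0 ≤ E i j := by
    intro i j
    rw [hEentry]
    exact mul_nonneg (Real.exp_pos _).le (myExpEntryNonneg htAnn i j)
  have hEdiag : ∀ i, 0 < E i i := by
    intro i
    rw [hEentry]
    exact mul_pos (Real.exp_pos _) (myExpDiagPos htAnn i)
  have hEoff : ∀ i j, i ≠ j → L i j < 0 → 0 < E i j := by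
    intro i j hij hL
    rw [hEentry]
    refine mul_pos (Real.exp_pos _) (lt_of_lt_of_le ?_ (myExpEntryLB htAnn i j))
    rw [Matrix.smul_apply, smul_eq_mul, hAoff i j hij]
    have : 0 < -L i j := by linarith
    exact mul_pos ht this
  have hErow : ∀ i, ∑ j, E i j = 1 := by
    intro i
    refine myExpRowSum (fun i => ?_) i
    have : ∀ j, (-(t • L)) i j = -(t * L i j) := by
      intro j
      simp [Matrix.neg_apply, Matrix.smul_apply, smul_eq_mul]
    simp only [this]
    rw [Finset.sum_neg_distrib, ← Finset.mul_sum, hLrow i]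
    simp
  set M : Matrix (Fin N) (Fin N) ℝ := Pe * E with hM_def
  have hMapp : ∀ i j, M i j = ∑ k, Pe i k * E k j := fun i j => Matrix.mul_apply
  have hMnn : ∀ i j, 0 ≤ M i j := by
    intro i j
    rw [hMapp]
    exact Finset.sum_nonneg fun k _ => mul_nonneg (hPnn i k) (hEnn k j)
  have hMrow : ∀ i, ∑ j, M i j = 1 := by
    intro i
    rw [hM_def, myRowSumMul]
    simp only [hErow, mul_one]
    exact hProw i
  have hMlow : ∀ i k j, Pe i k * E k j ≤ M i j := by
    intro i k j
    rw [hMapp]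
    exact Finset.single_le_sum (fun l _ => mul_nonneg (hPnn i l) (hEnn l j)) (Finset.mem_univ k)
  have hMdiag : ∀ i, 0 < M i i :=
    fun i => lt_of_lt_of_le (mul_pos (hPdiag i) (hEdiag i)) (hMlow i i i)
  have hMedge : ∀ b c : Fin N, c ≠ b → (0 < Pe c b ∨ L c b < 0) → 0 < M c b := by
    intro b c hcb hor
    rcases hor with hp | hl
    · exact lt_of_lt_of_le (mul_pos hp (hEdiag b)) (hMlow c b b)
    · exact lt_of_lt_of_le (mul_pos (hPdiag c) (hEoff c b hcb hl)) (hMlow c c b)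
  have hup : ∀ i k, 0 < (M ^ k) i r → 0 < (M ^ (k + 1)) i r := by
    intro i k h
    have heq : (M ^ (k + 1)) i r = ∑ l, M i l * (M ^ k) l r := by
      rw [_root_.pow_succ', Matrix.mul_apply]
    rw [heq]
    exact lt_of_lt_of_le (mul_pos (hMdiag i) h)
      (Finset.single_le_sum
        (fun l _ => mul_nonneg (hMnn i l) (myPowNonneg hMnn k l r)) (Finset.mem_univ i))
  have hupward : ∀ i k m, k ≤ m → 0 < (M ^ k) i r → 0 < (M ^ m) i r := by
    intro i k m hkm h
    induction m, hkm using Nat.le_induction with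
    | base => exact h
    | succ n hn ih => exact hup i n ih
  have hex : ∀ i, ∃ k, 0 < (M ^ k) i r := by
    intro i
    induction hr i with
    | refl => exact ⟨0, by simp [Matrix.one_apply]⟩
    | @tail b c hab hbc ih =>
      obtain ⟨k, hk⟩ := ih
      refine ⟨k + 1, ?_⟩
      have heq : (M ^ (k + 1)) c r = ∑ l, M c l * (M ^ k) l r := by
        rw [_root_.pow_succ', Matrix.mul_apply]
      rw [heq]
      exact lt_of_lt_of_le (mul_pos (hMedge b c hbc.1 hbc.2) hk)
        (Finset.single_le_sum
          (fun l _ => mul_nonneg (hMnn c l) (myPowNonneg hMnn k l r)) (Finset.mem_univ b))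
  choose f hf using hex
  set K : ℕ := (Finset.univ.sup f) + 1 with hK_def
  have hK : 0 < K := Nat.succ_pos _
  have hcol : ∀ i, 0 < (M ^ K) i r := fun i =>
    hupward i (f i) K
      (le_trans (Finset.le_sup (Finset.mem_univ i)) (Nat.le_succ _)) (hf i)
  obtain ⟨c, hc⟩ := myColumnsConverge hne hMnn hMrow hK hcol
  exact ⟨c, tendsto_pi_nhds.2 fun i => tendsto_pi_nhds.2 fun j => hc i j⟩
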